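/- If G and H are connected non-bipartite (finite simple) graphs, then their direct (tensor) product G ⊗ H is connected and non-bipartite. Moreover, if G is connected and non-bipartite, then G ⊗ K₂ is connected. -/

import Mathlib

open SimpleGraph

/-- The direct (tensor) product of two simple graphs. -/
def tensorProd {α β : Type*} (G : SimpleGraph α) (H : SimpleGraph β) :
    SimpleGraph (α × β) where
  Adj a b := G.Adj a.1 b.1 ∧ H.Adj a.2 b.2
  symm := by
    constructor
    intro a b h
    exact ⟨h.1.symm, h.2.symm⟩
  loopless := by
    constructor
    intro a h
    exact G.irrefl h.1

private lemma zmod2_ne {a b : ZMod 2} (h : a ≠ b) : b = a + 1 := by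
  revert h; revert a b; decide

/-- color parity along a walk -/
private lemma color_parity {V : Type*} {G : SimpleGraph V} (c : V → ZMod 2)
    (hc : ∀ {a b}, G.Adj a b → c a ≠ c b) :
    ∀ {u v : V} (p : G.Walk u v), c v = c u + (p.length : ZMod 2) := by
  intro u v p
  induction p with
  | nil => simp
  | cons h p ih =>
    rw [ih, zmod2_ne (hc h)]
    push_cast [SimpleGraph.Walk.length_cons]
    ring

private lemma not_colorable_of_odd_closed_walk {V : Type*} {G : SimpleGraph V}
    {u : V} (w : G.Walk u u) (hodd : Odd w.length) : ¬ G.Colorable 2 := by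
  rintro ⟨C⟩
  set c : V → ZMod 2 := fun x => ((C x : Fin 2).val : ZMod 2) with hcdef
  have hc : ∀ {a b}, G.Adj a b → c a ≠ c b := by
    intro a b hab
    have := C.valid hab
    simp only [hcdef]
    intro h
    apply this
    have : ∀ x y : Fin 2, ((x.val : ZMod 2) = (y.val : ZMod 2)) → x = y := by decide
    exact this _ _ h
  have h1 := color_parity c hc w
  have h0 : ((w.length : ℕ) : ZMod 2) = 0 := by
    have := h1.symm
    rwa [add_eq_left] at this
  rw [ZMod.natCast_eq_zero_iff] at h0
  rw [Nat.odd_iff] at hodd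
  omega

/-- in a connected non-2-colorable graph there is an odd closed walk -/
private lemma exists_odd_closed_walk {V : Type*} {G : SimpleGraph V}
    (hGc : G.Connected) (hGnb : ¬ G.Colorable 2) :
    ∃ (u : V) (w : G.Walk u u), Odd w.length := by
  by_contra hno
  push_neg at hno
  obtain ⟨r⟩ := hGc.nonempty
  apply hGnb
  refine ⟨SimpleGraph.Coloring.mk (fun v => (⟨G.dist r v % 2, by omega⟩ : Fin 2)) ?_⟩
  intro a b hab h
  simp only [Fin.mk.injEq] at h
  obtain ⟨p, hp⟩ := (hGc.preconnected r a).exists_walk_length_eq_dist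
  obtain ⟨q, hq⟩ := (hGc.preconnected r b).exists_walk_length_eq_dist
  have hlen : (p.append ((q.append (SimpleGraph.Walk.cons hab.symm SimpleGraph.Walk.nil)).reverse)).length
      = G.dist r a + (G.dist r b + 1) := by
    simp [SimpleGraph.Walk.length_append, SimpleGraph.Walk.length_reverse, hp, hq]
  have := hno r (p.append ((q.append (SimpleGraph.Walk.cons hab.symm SimpleGraph.Walk.nil)).reverse))
  rw [Nat.odd_iff] at this
  rw [hlen] at this
  omega

/-- zip two walks of the same length into a walk in the tensor product -/
private lemma zip_walk {α β : Type*} {G : SimpleGraph α} {H : SimpleGraph β} :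
    ∀ {u u' : α} {v v' : β} (p : G.Walk u u') (q : H.Walk v v'),
      p.length = q.length →
      ∃ w : (tensorProd G H).Walk (u, v) (u', v'), w.length = p.length := by
  intro u u' v v' p
  induction p generalizing v v' with
  | nil =>
    intro q hl
    cases q with
    | nil => exact ⟨SimpleGraph.Walk.nil, rfl⟩
    | cons h q => simp at hl
  | @cons a x b h p ih =>
    intro q hl
    cases q with
    | nil => simp at hl
    | @cons v y v2 h' q =>
      obtain ⟨w, hw⟩ := ih q (by simpa using hl)
      exact ⟨SimpleGraph.Walk.cons (show (tensorProd G H).Adj (a, v) (x, y) from ⟨h, h'⟩) w, by simp [hw]⟩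

/-- walks of all even added lengths -/
private lemma pad_walk {α : Type*} {G : SimpleGraph α} {u v x : α}
    (p : G.Walk u v) (h : G.Adj v x) (k : ℕ) :
    ∃ q : G.Walk u v, q.length = p.length + 2 * k := by
  induction k with
  | zero => exact ⟨p, by omega⟩
  | succ k ih =>
    obtain ⟨q, hq⟩ := ih
    refine ⟨q.append (SimpleGraph.Walk.cons h (SimpleGraph.Walk.cons h.symm SimpleGraph.Walk.nil)), ?_⟩
    simp only [SimpleGraph.Walk.length_append, SimpleGraph.Walk.length_cons,
      SimpleGraph.Walk.length_nil, hq]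
    omega

/-- In a connected graph with an odd closed walk, between any two vertices there
are walks of every sufficiently large length. -/
private lemma walks_all_lengths {α : Type*} {G : SimpleGraph α}
    (hGc : G.Connected) {w : α} (c : G.Walk w w) (hodd : Odd c.length)
    (u v : α) :
    ∃ N, ∀ n ≥ N, ∃ p : G.Walk u v, p.length = n := by
  obtain ⟨p0⟩ := hGc.preconnected u v
  obtain ⟨pv⟩ := hGc.preconnected v w
  -- odd closed walk at v
  set cv : G.Walk v v := pv.append (c.append pv.reverse) with hcv
  have hcvlen : cv.length = pv.length + (c.length + pv.length) := by
    simp [hcv, SimpleGraph.Walk.length_append, SimpleGraph.Walk.length_reverse]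
  have hcvodd : Odd cv.length := by
    rw [Nat.odd_iff] at hodd ⊢; omega
  have hcvpos : 0 < cv.length := by
    rw [Nat.odd_iff] at hcvodd; omega
  -- an edge at v
  have hnn : ¬ cv.Nil := by
    rw [SimpleGraph.Walk.nil_iff_length_eq]; omega
  obtain ⟨x, hx⟩ : ∃ x, G.Adj v x := ⟨cv.getVert 1, SimpleGraph.Walk.adj_snd hnn⟩
  refine ⟨p0.length + cv.length, fun n hn => ?_⟩
  by_cases hpar : n % 2 = p0.length % 2
  · obtain ⟨q, hq⟩ := pad_walk p0 hx ((n - p0.length) / 2)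
    exact ⟨q, by omega⟩
  · obtain ⟨q, hq⟩ := pad_walk (p0.append cv) hx ((n - (p0.length + cv.length)) / 2)
    refine ⟨q, ?_⟩
    rw [SimpleGraph.Walk.length_append] at hq
    rw [Nat.odd_iff] at hcvodd
    omega

/-- walks in K₂ of every length of the right parity -/
private lemma k2_walk : ∀ (n : ℕ) (i j : Fin 2), (i = j ↔ Even n) →
    ∃ p : (⊤ : SimpleGraph (Fin 2)).Walk i j, p.length = n := by
  intro n
  induction n with
  | zero =>
    intro i j h
    obtain rfl : i = j := h.mpr (Even.zero)
    exact ⟨SimpleGraph.Walk.nil, rfl⟩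
  | succ n ih =>
    intro i j h
    have hkj : (1 - j : Fin 2) ≠ j := by clear h ih; revert j; decide
    have h2 : ∀ i j : Fin 2, i = 1 - j ↔ ¬ i = j := by decide
    have hik : i = 1 - j ↔ Even n := by
      rw [h2, h, Nat.even_add_one, not_not]
    obtain ⟨p, hp⟩ := ih i (1 - j) hik
    refine ⟨p.append (SimpleGraph.Walk.cons (by simp [hkj]) SimpleGraph.Walk.nil), ?_⟩
    simp [SimpleGraph.Walk.length_append, hp]

theorem stmt8 {α β : Type*} [Fintype α] [Fintype β]
    (G : SimpleGraph α) (H : SimpleGraph β)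
    (hGc : G.Connected) (hGnb : ¬ G.Colorable 2)
    (hHc : H.Connected) (hHnb : ¬ H.Colorable 2) :
    (tensorProd G H).Connected ∧ ¬ (tensorProd G H).Colorable 2 ∧
      (tensorProd G (⊤ : SimpleGraph (Fin 2))).Connected := by
  obtain ⟨wG, cG, hcG⟩ := exists_odd_closed_walk hGc hGnb
  obtain ⟨wH, cH, hcH⟩ := exists_odd_closed_walk hHc hHnb
  refine ⟨?_, ?_, ?_⟩
  · -- connectivity of G ⊗ H
    have hne : Nonempty (α × β) := ⟨(hGc.nonempty.some, hHc.nonempty.some)⟩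
    rw [SimpleGraph.connected_iff]
    refine ⟨fun a b => ?_, hne⟩
    obtain ⟨NG, hNG⟩ := walks_all_lengths hGc cG hcG a.1 b.1
    obtain ⟨NH, hNH⟩ := walks_all_lengths hHc cH hcH a.2 b.2
    obtain ⟨p, hp⟩ := hNG (max NG NH) (le_max_left _ _)
    obtain ⟨q, hq⟩ := hNH (max NG NH) (le_max_right _ _)
    obtain ⟨w, -⟩ := zip_walk p q (by omega)
    exact ⟨w⟩
  · -- non-bipartiteness of G ⊗ H
    obtain ⟨NG, hNG⟩ := walks_all_lengths hGc cG hcG wG wG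
    obtain ⟨NH, hNH⟩ := walks_all_lengths hHc cH hcH wH wH
    set n : ℕ := 2 * (max NG NH) + 1 with hn
    obtain ⟨p, hp⟩ := hNG n (by omega)
    obtain ⟨q, hq⟩ := hNH n (by omega)
    obtain ⟨w, hw⟩ := zip_walk p q (by omega)
    exact not_colorable_of_odd_closed_walk w (by rw [hw, hp]; exact ⟨max NG NH, by omega⟩)
  · -- connectivity of G ⊗ K₂
    have hne : Nonempty (α × Fin 2) := ⟨(hGc.nonempty.some, 0)⟩
    rw [SimpleGraph.connected_iff]
    refine ⟨fun a b => ?_, hne⟩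
    obtain ⟨NG, hNG⟩ := walks_all_lengths hGc cG hcG a.1 b.1
    -- choose n ≥ NG with (a.2 = b.2 ↔ Even n)
    have : ∃ n ≥ NG, (a.2 = b.2 ↔ Even n) := by
      by_cases hab : a.2 = b.2
      · exact ⟨2 * NG, by omega, by simp only [hab, true_iff]; exact ⟨NG, by omega⟩⟩
      · refine ⟨2 * NG + 1, by omega, ?_⟩
        simp only [hab, false_iff]
        intro h
        rw [Nat.even_iff] at h; omega
    obtain ⟨n, hnN, hnpar⟩ := this
    obtain ⟨p, hp⟩ := hNG n hnN
    obtain ⟨q, hq⟩ := k2_walk n a.2 b.2 hnpar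
    obtain ⟨w, -⟩ := zip_walk p q (by omega)
    exact ⟨w⟩
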